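/- Cut-set bound for repairing h nodes in a single rack (Proposition 1, equality characterization). Under the hypotheses of the cut-set bound (an (n,k,l) MDS code C over F, failed nodes j'_1,…,j'_h in host rack e' with 1 ≤ h ≤ min{u, s̄u − v}, helper racks R with |R| = d̄, and repair functions f_e : (F^l)^u → F^{β_e} and g recovering the failed nodes from ((f_e(c̄_e))_{e∈R}, (c_{e'u+g})_{g∉{g'_1,…,g'_h}}) for every c ∈ C), assume in addition k̄ ≥ 2. If s̄ · ∑_{e∈R} β_e = h·d̄·l, then s̄·β_e = h·l for every e ∈ R; that is, equality in the cut-set bound forces every helper rack to contribute exactly hl/s̄ symbols of F. -/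

import Mathlib

/-- **Cut-set bound, equality characterization** (Proposition 1).
Under the hypotheses of the cut-set bound, with `k̄ ≥ 2`, if
`s̄ · ∑_{e ∈ R} β_e = h·d̄·l`, then `s̄ · β_e = h·l` for every helper rack `e ∈ R`. -/
theorem cut_set_bound_equality
    (F : Type*) [Field F] [Fintype F]
    (u nb kb v db sb l h : ℕ)
    (hu : 1 < u) (hkb : 2 ≤ kb) (hnb : kb < nb) (hv : v < u)
    (hdb1 : kb ≤ db) (hdb2 : db ≤ nb - 1) (hsb : sb = db - kb + 1)
    (hh1 : 1 ≤ h) (hh2 : h ≤ u) (hh3 : h + v ≤ sb * u)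
    (C : Finset ((Fin nb × Fin u) → Fin l → F))
    (hCcard : C.card = Fintype.card F ^ ((kb * u + v) * l))
    (hMDS : ∀ S : Finset (Fin nb × Fin u), S.card = kb * u + v →
      ∀ c ∈ C, ∀ c' ∈ C, (∀ j ∈ S, c j = c' j) → c = c')
    (e' : Fin nb) (g' : Fin h → Fin u) (hg' : Function.Injective g')
    (R : Finset (Fin nb)) (hR : R.card = db) (he'R : e' ∉ R)
    (β : Fin nb → ℕ)
    (f : (e : Fin nb) → ((Fin u → Fin l → F) → (Fin (β e) → F)))
    (G : ((e : {x // x ∈ R}) → (Fin (β e.1) → F)) →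
         (({g : Fin u // ∀ b, g ≠ g' b}) → Fin l → F) → (Fin h → Fin l → F))
    (hrepair : ∀ c ∈ C,
      G (fun e => f e.1 (fun g => c (e.1, g))) (fun g => c (e', g.1))
        = fun b => c (e', g' b))
    (heq : sb * ∑ e ∈ R, β e = h * (db * l)) :
    ∀ e ∈ R, sb * β e = h * l := by
  classical
  have hF2 : 2 ≤ Fintype.card F := Fintype.one_lt_card
  have hsb1 : 1 ≤ sb := by omega
  -- KEY LEMMA: every `sb`-subset of helper racks contributes at least `h*l`.
  have hkey : ∀ S ⊆ R, S.card = sb → h * l ≤ ∑ e ∈ S, β e := by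
    intro S hSR hScard
    -- the racks fully determined by the repair data
    set Brk : Finset (Fin nb) := insert e' (R \ S) with hBrkdef
    have he'RS : e' ∉ R \ S := fun hm => he'R (Finset.mem_sdiff.1 hm).1
    have hBrkcard : Brk.card = kb := by
      rw [hBrkdef, Finset.card_insert_of_notMem he'RS, Finset.card_sdiff_of_subset hSR, hR, hScard]
      omega
    set B : Finset (Fin nb × Fin u) := Brk ×ˢ (Finset.univ : Finset (Fin u)) with hBdef
    have hBcard : B.card = kb * u := by
      rw [hBdef, Finset.card_product, hBrkcard, Finset.card_univ, Fintype.card_fin]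
    have hvB : v ≤ Bᶜ.card := by
      rw [Finset.card_compl, hBcard]
      have h1 : Fintype.card (Fin nb × Fin u) = nb * u := by simp
      have h2 : (kb + 1) * u ≤ nb * u := Nat.mul_le_mul_right _ (by omega)
      rw [Nat.add_mul, one_mul] at h2
      omega
    obtain ⟨V, hVB, hVcard⟩ := Finset.exists_subset_card_eq hvB
    set K : Finset (Fin nb × Fin u) := B ∪ V with hKdef
    have hdisj : Disjoint B V := Finset.disjoint_left.2 fun a haB haV =>
      (Finset.mem_compl.1 (hVB haV)) haB
    have hKcard : K.card = kb * u + v := by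
      rw [hKdef, Finset.card_union_of_disjoint hdisj, hBcard, hVcard]
    -- restriction to K is injective on C
    have hKinj : Set.InjOn (fun c : (Fin nb × Fin u) → Fin l → F => fun j : {x // x ∈ K} => c j.1) (C : Set _) := by
      intro c hc c' hc' hcc
      exact hMDS K hKcard c hc c' hc' (fun j hj => congrFun hcc ⟨j, hj⟩)
    have hcardK : Fintype.card ({x // x ∈ K} → Fin l → F)
        = Fintype.card F ^ ((kb * u + v) * l) := by
      rw [Fintype.card_fun, Fintype.card_fun, Fintype.card_fin, Fintype.card_coe, hKcard,
        ← pow_mul, mul_comm l]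
    have himgK : C.image (fun c => fun j : {x // x ∈ K} => c j.1) = Finset.univ := by
      apply Finset.eq_univ_of_card
      rw [Finset.card_image_of_injOn hKinj, hCcard, hcardK]
    have hBK : B ⊆ K := Finset.subset_union_left
    -- restriction to B is surjective
    have hsurjB : ∀ t : {x // x ∈ B} → Fin l → F,
        ∃ c ∈ C, ∀ j : {x // x ∈ B}, c j.1 = t j := by
      intro t
      have hmem : (fun j : {x // x ∈ K} => if hj : j.1 ∈ B then t ⟨j.1, hj⟩ else 0)
          ∈ C.image (fun c => fun j : {x // x ∈ K} => c j.1) := by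
        rw [himgK]; exact Finset.mem_univ _
      obtain ⟨c, hc, hceq⟩ := Finset.mem_image.1 hmem
      refine ⟨c, hc, fun j => ?_⟩
      have h3 := congrFun hceq ⟨j.1, hBK j.2⟩
      rw [dif_pos j.2] at h3
      exact h3
    have himgB : C.image (fun c => fun j : {x // x ∈ B} => c j.1) = Finset.univ := by
      apply Finset.eq_univ_iff_forall.2
      intro t
      obtain ⟨c, hc, hceq⟩ := hsurjB t
      exact Finset.mem_image.2 ⟨c, hc, funext hceq⟩
    have hcardB : Fintype.card ({x // x ∈ B} → Fin l → F)
        = Fintype.card F ^ (kb * u * l) := by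
      rw [Fintype.card_fun, Fintype.card_fun, Fintype.card_fin, Fintype.card_coe, hBcard,
        ← pow_mul, mul_comm l]
    -- the failed coordinates and the fixed coordinates
    set Fl : Finset (Fin nb × Fin u) := {e'} ×ˢ (Finset.univ.image g') with hFldef
    have hFlB : Fl ⊆ B := by
      intro j hj
      rw [hFldef, Finset.mem_product] at hj
      rw [hBdef, Finset.mem_product]
      refine ⟨?_, Finset.mem_univ _⟩
      rw [Finset.mem_singleton.1 hj.1]
      exact Finset.mem_insert_self _ _
    set Fx : Finset (Fin nb × Fin u) := B \ Fl with hFxdef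
    have hFxcard : Fx.card = kb * u - h := by
      rw [hFxdef, Finset.card_sdiff_of_subset hFlB, hBcard, hFldef, Finset.card_product,
        Finset.card_singleton, Finset.card_image_of_injective _ hg', Finset.card_univ,
        Fintype.card_fin, one_mul]
    have hmemRS : ∀ e : {x // x ∈ R}, e.1 ∉ S → ∀ g : Fin u, (e.1, g) ∈ Fx := by
      intro e hes g
      rw [hFxdef, Finset.mem_sdiff]
      constructor
      · rw [hBdef, Finset.mem_product]
        exact ⟨Finset.mem_insert_of_mem (Finset.mem_sdiff.2 ⟨e.2, hes⟩), Finset.mem_univ _⟩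
      · intro hm
        rw [hFldef, Finset.mem_product, Finset.mem_singleton] at hm
        exact he'R (hm.1 ▸ e.2)
    have hmemE' : ∀ g : {g : Fin u // ∀ b, g ≠ g' b}, (e', g.1) ∈ Fx := by
      intro g
      rw [hFxdef, Finset.mem_sdiff]
      constructor
      · rw [hBdef, Finset.mem_product]
        exact ⟨Finset.mem_insert_self _ _, Finset.mem_univ _⟩
      · intro hm
        rw [hFldef, Finset.mem_product, Finset.mem_image] at hm
        obtain ⟨b, _, hb⟩ := hm.2
        exact g.2 b (hb.symm)
    have hfail : ∀ j : {x // x ∈ B}, j.1 ∉ Fx → j.1.1 = e' ∧ ∃ b, g' b = j.1.2 := by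
      intro j hj
      have : j.1 ∈ Fl := by
        by_contra hc
        exact hj (Finset.mem_sdiff.2 ⟨j.2, hc⟩)
      rw [hFldef, Finset.mem_product, Finset.mem_singleton, Finset.mem_image] at this
      obtain ⟨hfst, b, _, hb⟩ := this
      exact ⟨hfst, b, hb⟩
    -- repair-data map Φ and reconstruction map Ψ
    set Φ : ((Fin nb × Fin u) → Fin l → F) →
        (({x // x ∈ Fx} → Fin l → F) × ((e : {x // x ∈ S}) → Fin (β e.1) → F)) :=
      fun c => (fun j => c j.1, fun e => f e.1 (fun g => c (e.1, g))) with hΦdef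
    set Ψ : (({x // x ∈ Fx} → Fin l → F) × ((e : {x // x ∈ S}) → Fin (β e.1) → F)) →
        ({x // x ∈ B} → Fin l → F) :=
      fun p j =>
        if hj : j.1 ∈ Fx then p.1 ⟨j.1, hj⟩
        else
          G (fun e => if hes : e.1 ∈ S then p.2 ⟨e.1, hes⟩
              else f e.1 (fun g => p.1 ⟨(e.1, g), hmemRS e hes g⟩))
            (fun g => p.1 ⟨(e', g.1), hmemE' g⟩)
            ((hfail j hj).2.choose) with hΨdef
    have hfact : ∀ c ∈ C, (fun j : {x // x ∈ B} => c j.1) = Ψ (Φ c) := by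
      intro c hc
      funext j
      by_cases hj : j.1 ∈ Fx
      · simp only [hΨdef, dif_pos hj]; rfl
      · simp only [hΨdef, dif_neg hj]
        have hje := (hfail j hj).1
        have hb := (hfail j hj).2
        have hrep := congrFun (hrepair c hc) hb.choose
        refine Eq.trans (congrArg c (Prod.ext hje hb.choose_spec.symm)) (Eq.trans hrep.symm ?_)
        have hA1 : (fun (e : {x // x ∈ R}) => f e.1 (fun g => c (e.1, g)))
            = (fun (e : {x // x ∈ R}) => if hes : e.1 ∈ S then (Φ c).2 ⟨e.1, hes⟩
                else f e.1 (fun g => (Φ c).1 ⟨(e.1, g), hmemRS e hes g⟩)) := by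
          funext e
          by_cases hes : e.1 ∈ S
          · simp only [dif_pos hes]; rfl
          · simp only [dif_neg hes]; rfl
        rw [hA1]
    have hcardΩ : Fintype.card
        (({x // x ∈ Fx} → Fin l → F) × ((e : {x // x ∈ S}) → Fin (β e.1) → F))
        = Fintype.card F ^ ((kb * u - h) * l + ∑ e ∈ S, β e) := by
      rw [Fintype.card_prod, Fintype.card_fun, Fintype.card_fun, Fintype.card_fin,
        Fintype.card_coe, hFxcard, Fintype.card_pi]
      have : ∀ e : {x // x ∈ S}, Fintype.card (Fin (β e.1) → F)
          = Fintype.card F ^ β e.1 := by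
        intro e; rw [Fintype.card_fun, Fintype.card_fin]
      rw [Finset.prod_congr rfl (fun e _ => this e), Finset.prod_pow_eq_pow_sum,
        ← pow_mul, mul_comm l, ← pow_add]
      congr 2
      exact Finset.sum_coe_sort S (fun e => β e)
    have hchain : Fintype.card F ^ (kb * u * l)
        ≤ Fintype.card F ^ ((kb * u - h) * l + ∑ e ∈ S, β e) := by
      calc Fintype.card F ^ (kb * u * l)
          = Fintype.card ({x // x ∈ B} → Fin l → F) := hcardB.symm
        _ = (C.image (fun c => fun j : {x // x ∈ B} => c j.1)).card := by
            rw [himgB, Finset.card_univ]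
        _ = ((C.image Φ).image Ψ).card := by
            rw [Finset.image_image]
            exact congrArg Finset.card (Finset.image_congr hfact)
        _ ≤ (C.image Φ).card := Finset.card_image_le
        _ ≤ Fintype.card
            (({x // x ∈ Fx} → Fin l → F) × ((e : {x // x ∈ S}) → Fin (β e.1) → F)) := by
            rw [← Finset.card_univ]; exact Finset.card_le_univ _
        _ = _ := hcardΩ
    have hexp := (Nat.pow_le_pow_iff_right hF2).1 hchain
    have hhku : h ≤ kb * u := le_trans hh2 (Nat.le_mul_of_pos_left u (by omega))
    have h1 : (kb * u - h) * l = kb * u * l - h * l := Nat.sub_mul _ _ _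
    have h2 : h * l ≤ kb * u * l := Nat.mul_le_mul_right l hhku
    omega
  -- COMBINATORIAL PART
  set P := R.powersetCard sb with hPdef
  have hPsum : ∀ S ∈ P, h * l ≤ ∑ e ∈ S, β e := by
    intro S hS
    obtain ⟨hsub, hcard⟩ := Finset.mem_powersetCard.1 hS
    exact hkey S hsub hcard
  have hcount : ∀ e ∈ R, (P.filter (fun S => e ∈ S)).card = (db - 1).choose (sb - 1) := by
    intro e he
    have : (P.filter (fun S => e ∈ S)).card = ((R.erase e).powersetCard (sb - 1)).card := by
      have hi : ∀ S ∈ P.filter (fun S => e ∈ S),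
          S.erase e ∈ (R.erase e).powersetCard (sb - 1) := by
        intro S hS
        rw [Finset.mem_filter, hPdef, Finset.mem_powersetCard] at hS
        rw [Finset.mem_powersetCard]
        exact ⟨Finset.erase_subset_erase _ hS.1.1,
          by rw [Finset.card_erase_of_mem hS.2, hS.1.2]⟩
      have hj : ∀ T ∈ (R.erase e).powersetCard (sb - 1),
          insert e T ∈ P.filter (fun S => e ∈ S) := by
        intro T hT
        rw [Finset.mem_powersetCard] at hT
        have heT : e ∉ T := fun hm => (Finset.mem_erase.1 (hT.1 hm)).1 rfl
        rw [Finset.mem_filter, hPdef, Finset.mem_powersetCard]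
        refine ⟨⟨Finset.insert_subset he (hT.1.trans (Finset.erase_subset _ _)), ?_⟩,
          Finset.mem_insert_self _ _⟩
        rw [Finset.card_insert_of_notMem heT, hT.2]
        omega
      exact Finset.card_bij' (fun S _ => S.erase e) (fun T _ => insert e T) hi hj
        (fun S hS => Finset.insert_erase (Finset.mem_filter.1 hS).2)
        (fun T hT => Finset.erase_insert
          (fun hm => (Finset.mem_erase.1 ((Finset.mem_powersetCard.1 hT).1 hm)).1 rfl))
    rw [this, Finset.card_powersetCard, Finset.card_erase_of_mem he, hR]
  have hswap : ∑ S ∈ P, ∑ e ∈ S, β e = ∑ e ∈ R, (db - 1).choose (sb - 1) * β e := by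
    have hS2 : ∀ S ∈ P, ∑ e ∈ S, β e = ∑ e ∈ R, if e ∈ S then β e else 0 := by
      intro S hS
      rw [Finset.sum_ite_mem, Finset.inter_eq_right.2 (Finset.mem_powersetCard.1 hS).1]
    rw [Finset.sum_congr rfl hS2, Finset.sum_comm]
    apply Finset.sum_congr rfl
    intro e he
    rw [← Finset.sum_filter, Finset.sum_const, smul_eq_mul, hcount e he]
  have hPcard : P.card = db.choose sb := by rw [hPdef, Finset.card_powersetCard, hR]
  have hch : db * (db - 1).choose (sb - 1) = db.choose sb * sb := by
    have h4 := Nat.add_one_mul_choose_eq (db - 1) (sb - 1)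
    have h5 : db - 1 + 1 = db := by omega
    have h6 : sb - 1 + 1 = sb := by omega
    simp only [Nat.succ_eq_add_one, h5, h6] at h4
    exact h4
  have htot : ∑ S ∈ P, ∑ e ∈ S, β e = P.card * (h * l) := by
    apply Nat.eq_of_mul_eq_mul_left (show 0 < sb by omega)
    calc sb * ∑ S ∈ P, ∑ e ∈ S, β e
        = sb * ((db - 1).choose (sb - 1) * ∑ e ∈ R, β e) := by
          rw [hswap, Finset.mul_sum, Finset.mul_sum, Finset.mul_sum]
      _ = (db - 1).choose (sb - 1) * (sb * ∑ e ∈ R, β e) := by ring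
      _ = (db - 1).choose (sb - 1) * (h * (db * l)) := by rw [heq]
      _ = (db * (db - 1).choose (sb - 1)) * (h * l) := by ring
      _ = (db.choose sb * sb) * (h * l) := by rw [hch]
      _ = sb * (P.card * (h * l)) := by rw [hPcard]; ring
  have hallS : ∀ S ∈ P, ∑ e ∈ S, β e = h * l := by
    by_contra hcon
    push_neg at hcon
    obtain ⟨S0, hS0P, hS0⟩ := hcon
    have hlt : ∑ S ∈ P, (h * l) < ∑ S ∈ P, ∑ e ∈ S, β e :=
      Finset.sum_lt_sum hPsum ⟨S0, hS0P, lt_of_le_of_ne (hPsum S0 hS0P) (Ne.symm hS0)⟩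
    rw [Finset.sum_const, smul_eq_mul, htot] at hlt
    omega
  have hconst : ∀ e1 ∈ R, ∀ e2 ∈ R, β e1 = β e2 := by
    intro e1 he1 e2 he2
    rcases eq_or_ne e1 e2 with rfl | hne
    · rfl
    have hcard2 : sb - 1 ≤ ((R.erase e1).erase e2).card := by
      rw [Finset.card_erase_of_mem (Finset.mem_erase.2 ⟨hne.symm, he2⟩),
        Finset.card_erase_of_mem he1, hR]
      omega
    obtain ⟨S0, hS0sub, hS0card⟩ := Finset.exists_subset_card_eq hcard2
    have he1S0 : e1 ∉ S0 := fun hm =>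
      (Finset.mem_erase.1 (Finset.mem_of_mem_erase (hS0sub hm) : e1 ∈ R.erase e1)).1 rfl
    have he2S0 : e2 ∉ S0 := fun hm => (Finset.mem_erase.1 (hS0sub hm)).1 rfl
    have hS0R : S0 ⊆ R :=
      hS0sub.trans ((Finset.erase_subset _ _).trans (Finset.erase_subset _ _))
    have hmem1 : insert e1 S0 ∈ P := by
      rw [hPdef, Finset.mem_powersetCard]
      exact ⟨Finset.insert_subset he1 hS0R,
        by rw [Finset.card_insert_of_notMem he1S0, hS0card]; omega⟩
    have hmem2 : insert e2 S0 ∈ P := by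
      rw [hPdef, Finset.mem_powersetCard]
      exact ⟨Finset.insert_subset he2 hS0R,
        by rw [Finset.card_insert_of_notMem he2S0, hS0card]; omega⟩
    have hs1 := hallS _ hmem1
    have hs2 := hallS _ hmem2
    rw [Finset.sum_insert he1S0] at hs1
    rw [Finset.sum_insert he2S0] at hs2
    omega
  intro e he
  have hsum : ∑ x ∈ R, β x = db * β e := by
    rw [Finset.sum_congr rfl (fun x hx => hconst x hx e he), Finset.sum_const, hR,
      smul_eq_mul]
  rw [hsum] at heq
  apply Nat.eq_of_mul_eq_mul_left (show 0 < db by omega)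
  calc db * (sb * β e) = sb * (db * β e) := by ring
    _ = h * (db * l) := heq
    _ = db * (h * l) := by ring
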